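/- arXiv:0710.1522 — 2 statements merged into one kernel-verified Lean document; each statement's English description precedes it below -/
import Mathlib

section
/- Let f₀(x) = √(2/π)·e^{-x²/2} for x ≥ 0 (and 0 for x < 0), let ε₀ ∈ (0,1), and let x₀ > 0 satisfy ∫₀^{x₀} f₀(x)/ε₀ dx = 1. Then for every probability density f supported on [0,∞) with f(x) ≤ f₀(x)/ε₀ for all x, we have ∫₀^∞ x f(x) dx ≥ ∫₀^{x₀} x f₀(x)/ε₀ dx. -/
open MeasureTheory

/-- The half-normal density. -/
noncomputable def halfNormalDensity (x : ℝ) : ℝ :=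
  if 0 ≤ x then Real.sqrt (2 / Real.pi) * Real.exp (-x ^ 2 / 2) else 0

lemma hnd_nonneg (x : ℝ) : 0 ≤ halfNormalDensity x := by
  unfold halfNormalDensity; split
  · positivity
  · exact le_rfl

lemma hnd_meas : Measurable halfNormalDensity := by
  unfold halfNormalDensity
  exact Measurable.ite measurableSet_Ici (by fun_prop) measurable_const

lemma hnd_le (x : ℝ) :
    halfNormalDensity x ≤ Real.sqrt (2 / Real.pi) * Real.exp (-(1/2) * x ^ 2) := by
  unfold halfNormalDensity; split
  · rw [neg_div]; ring_nf; exact le_refl _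
  · positivity

lemma hnd_integrable : Integrable halfNormalDensity := by
  refine Integrable.mono ((integrable_exp_neg_mul_sq (by norm_num : (0:ℝ) < 1/2)).const_mul
    (Real.sqrt (2 / Real.pi))) hnd_meas.aestronglyMeasurable ?_
  refine Filter.Eventually.of_forall fun x => ?_
  rw [Real.norm_eq_abs, Real.norm_eq_abs, abs_of_nonneg (hnd_nonneg x)]
  exact (hnd_le x).trans (le_abs_self _)

lemma hnd_mul_integrable : Integrable (fun x => |x| * halfNormalDensity x) := by
  have h := ((integrable_mul_exp_neg_mul_sq (by norm_num : (0:ℝ) < 1/2)).abs).const_mul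
    (Real.sqrt (2 / Real.pi))
  refine Integrable.mono h (measurable_id.abs.mul hnd_meas).aestronglyMeasurable ?_
  refine Filter.Eventually.of_forall fun x => ?_
  simp only [Real.norm_eq_abs, abs_mul, abs_abs, Real.abs_exp]
  rw [abs_of_nonneg (hnd_nonneg x), abs_of_nonneg (Real.sqrt_nonneg _)]
  calc |x| * halfNormalDensity x
      ≤ |x| * (Real.sqrt (2 / Real.pi) * Real.exp (-(1/2) * x ^ 2)) :=
        mul_le_mul_of_nonneg_left (hnd_le x) (abs_nonneg x)
    _ = Real.sqrt (2 / Real.pi) * (|x| * Real.exp (-(1/2) * x ^ 2)) := by ring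

theorem stmt_6 (ε₀ : ℝ) (hε₀ : ε₀ ∈ Set.Ioo (0 : ℝ) 1) (x₀ : ℝ) (hx₀ : 0 < x₀)
    (hx₀int : ∫ x in Set.Ioc (0 : ℝ) x₀, halfNormalDensity x / ε₀ = 1)
    (f : ℝ → ℝ) (hf : Measurable f) (hf0 : ∀ x, 0 ≤ f x)
    (hfneg : ∀ x < (0 : ℝ), f x = 0)
    (hfle : ∀ x, f x ≤ halfNormalDensity x / ε₀)
    (hfint : ∫ x, f x = 1) :
    ∫ x in Set.Ioi (0 : ℝ), x * f x ≥
      ∫ x in Set.Ioc (0 : ℝ) x₀, x * (halfNormalDensity x / ε₀) := by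
  obtain ⟨hε₀0, hε₀1⟩ := hε₀
  set G : ℝ → ℝ := Set.indicator (Set.Ioc 0 x₀) (fun x => halfNormalDensity x / ε₀) with hG
  -- integrability facts
  have hf_int : Integrable f := by
    refine Integrable.mono (hnd_integrable.div_const ε₀) hf.aestronglyMeasurable ?_
    refine Filter.Eventually.of_forall fun x => ?_
    rw [Real.norm_eq_abs, Real.norm_eq_abs, abs_of_nonneg (hf0 x)]
    exact (hfle x).trans (le_abs_self _)
  have hxf_int : Integrable (fun x => x * f x) := by
    refine Integrable.mono ((hnd_mul_integrable.div_const ε₀)) ?_ ?_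
    · exact (measurable_id.mul hf).aestronglyMeasurable
    · refine Filter.Eventually.of_forall fun x => ?_
      simp only [Real.norm_eq_abs, abs_mul]
      rw [abs_of_nonneg (hf0 x),
        abs_of_nonneg (div_nonneg (mul_nonneg (abs_nonneg x) (hnd_nonneg x)) hε₀0.le), mul_div_assoc]
      exact mul_le_mul_of_nonneg_left (hfle x) (abs_nonneg x)
  have hG_meas : Measurable G :=
    (hnd_meas.div_const ε₀).indicator measurableSet_Ioc
  have hG_int : Integrable G :=
    ((hnd_integrable.div_const ε₀).integrableOn).integrable_indicator measurableSet_Ioc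
  have hxG_int : Integrable (fun x => x * G x) := by
    have : (fun x => x * G x) =
        Set.indicator (Set.Ioc 0 x₀) (fun x => x * (halfNormalDensity x / ε₀)) := by
      funext x
      by_cases hx : x ∈ Set.Ioc 0 x₀ <;>
        simp [hG, Set.indicator_of_mem, Set.indicator_of_notMem, hx]
    rw [this]
    refine (IntegrableOn.integrable_indicator ?_ measurableSet_Ioc)
    refine Integrable.mono ((hnd_mul_integrable.div_const ε₀)).integrableOn
      ((measurable_id.mul (hnd_meas.div_const ε₀)).aestronglyMeasurable) ?_
    refine Filter.Eventually.of_forall fun x => ?_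
    simp only [Real.norm_eq_abs, abs_mul, Pi.div_apply, abs_div]
    rw [abs_abs, abs_of_nonneg (hnd_nonneg x), abs_of_nonneg hε₀0.le, mul_div_assoc]
  -- integral of G is 1
  have hG_total : ∫ x, G x = 1 := by
    rw [hG, integral_indicator measurableSet_Ioc]
    exact hx₀int
  -- main pointwise inequality a.e.
  have hne : ∀ᵐ x : ℝ, x ≠ (0:ℝ) := by
    rw [ae_iff]
    simp only [not_not, Set.setOf_eq_eq_singleton]
    exact Real.volume_singleton
  have hae : ∀ᵐ x : ℝ, 0 ≤ (x - x₀) * (f x - G x) := by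
    filter_upwards [hne] with x hx
    rcases lt_trichotomy x 0 with h | h | h
    · have hGx : G x = 0 := Set.indicator_of_notMem (by simp [Set.mem_Ioc]; intro h'; linarith) _
      simp [hfneg x h, hGx]
    · exact absurd h hx
    · by_cases hle : x ≤ x₀
      · have hGx : G x = halfNormalDensity x / ε₀ :=
          Set.indicator_of_mem (Set.mem_Ioc.mpr ⟨h, hle⟩) _
        have h1 : f x - G x ≤ 0 := by rw [hGx]; linarith [hfle x]
        nlinarith [mul_nonneg (by linarith : (0:ℝ) ≤ x₀ - x) (by linarith : (0:ℝ) ≤ G x - f x)]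
      · have hGx : G x = 0 := Set.indicator_of_notMem (by simp [Set.mem_Ioc]; intro h'; linarith) _
        have h1 : 0 ≤ f x - G x := by rw [hGx]; simpa using hf0 x
        exact mul_nonneg (by linarith) h1
  have key : 0 ≤ ∫ x, (x - x₀) * (f x - G x) := integral_nonneg_of_ae hae
  have hsplit : ∫ x, (x - x₀) * (f x - G x)
      = (∫ x, x * f x) - (∫ x, x * G x) - x₀ * ((∫ x, f x) - (∫ x, G x)) := by
    have h1 : (fun x => (x - x₀) * (f x - G x))
        = fun x => (x * f x - x * G x) - x₀ * (f x - G x) := by funext x; ring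
    have i1 : Integrable (fun x : ℝ => x * f x - x * G x) := hxf_int.sub hxG_int
    have i2 : Integrable (fun x : ℝ => x₀ * (f x - G x)) := (hf_int.sub hG_int).const_mul x₀
    rw [h1, integral_sub i1 i2, integral_sub hxf_int hxG_int, MeasureTheory.integral_const_mul,
      integral_sub hf_int hG_int]
  rw [hfint, hG_total] at hsplit
  have hL : ∫ x in Set.Ioi (0:ℝ), x * f x = ∫ x, x * f x := by
    rw [← integral_indicator measurableSet_Ioi]
    congr 1; funext x
    by_cases hx : x ∈ Set.Ioi (0:ℝ)
    · simp [hx]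
    · rw [Set.indicator_of_notMem hx]
      rcases lt_or_eq_of_le (le_of_not_gt (by simpa using hx)) with h | h
      · simp [hfneg x h]
      · simp [h]
  have hR : ∫ x in Set.Ioc (0:ℝ) x₀, x * (halfNormalDensity x / ε₀) = ∫ x, x * G x := by
    rw [← integral_indicator measurableSet_Ioc]
    congr 1; funext x
    by_cases hx : x ∈ Set.Ioc (0:ℝ) x₀ <;>
      simp [hG, Set.indicator_of_mem, Set.indicator_of_notMem, hx]
  rw [ge_iff_le, hR, hL]
  linarith
end

section
/- For i.i.d. half-normal random variables |h₁|,…,|h_S| (with hᵢ ~ N(0,1)) and any k > 0, P(Σᵢ |hᵢ| < k) ≤ ((ek/S)·√(2/π))^S. -/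
open MeasureTheory ProbabilityTheory Real Set
open scoped ENNReal NNReal

lemma aux_integrableOn_Ioi {t : ℝ} (ht : 0 < t) :
    IntegrableOn (fun x : ℝ => Real.exp (-t * |x|)) (Ioi 0) := by
  refine (exp_neg_integrableOn_Ioi 0 ht).congr_fun (fun x hx => ?_) measurableSet_Ioi
  rw [abs_of_pos (by exact hx)]

lemma aux_integrable {t : ℝ} (ht : 0 < t) :
    Integrable (fun x : ℝ => Real.exp (-t * |x|)) := by
  have hIoi := aux_integrableOn_Ioi ht
  have m : MeasurableEmbedding fun x : ℝ => -x :=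
    (Homeomorph.neg ℝ).measurableEmbedding
  have hIic : IntegrableOn (fun x : ℝ => Real.exp (-t * |x|)) (Iic 0) := by
    rw [← Measure.map_neg_eq_self (volume : Measure ℝ), m.integrableOn_map_iff]
    simp_rw [Function.comp_def, abs_neg, neg_preimage, neg_Iic, neg_zero]
    exact (integrableOn_Ici_iff_integrableOn_Ioi (hb := enorm_ne_top)).mpr hIoi
  have := hIic.union hIoi
  rwa [Iic_union_Ioi, integrableOn_univ] at this

lemma aux_integral {t : ℝ} (ht : 0 < t) :
    ∫ x : ℝ, Real.exp (-t * |x|) = 2 / t := by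
  rw [integral_comp_abs (f := fun y => Real.exp (-t * y))]
  have h1 : ∀ x : ℝ, Real.exp (-t * x) = Real.exp (-(t * x)) := fun x => by ring_nf
  simp_rw [h1]
  rw [integral_comp_mul_left_Ioi (fun y => Real.exp (-y)) 0 ht, mul_zero,
    integral_exp_neg_Ioi_zero]
  simp [div_eq_mul_inv, mul_comm]

lemma aux_sqrt : Real.sqrt (2 / Real.pi) = 2 / Real.sqrt (2 * Real.pi) := by
  have hπ : (0:ℝ) < Real.pi := Real.pi_pos
  rw [show (2:ℝ) / Real.pi = 2^2 / (2 * Real.pi) by field_simp,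
    Real.sqrt_div (by positivity), Real.sqrt_sq (by norm_num)]

lemma aux_gauss_mgf {t : ℝ} (ht : 0 < t) :
    ∫ x, Real.exp (-t * |x|) ∂(gaussianReal 0 1) ≤ Real.sqrt (2 / Real.pi) / t := by
  have hπ : (0:ℝ) < Real.pi := Real.pi_pos
  have h1 : gaussianReal 0 1 = volume.withDensity (gaussianPDF 0 1) :=
    gaussianReal_of_var_ne_zero 0 one_ne_zero
  have hmeas : Measurable fun x => (gaussianPDFReal 0 1 x).toNNReal :=
    (measurable_gaussianPDFReal 0 1).real_toNNReal
  have h2 : (gaussianPDF 0 1) = fun x => ((gaussianPDFReal 0 1 x).toNNReal : ℝ≥0∞) := by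
    ext x; rw [gaussianPDF]; rfl
  rw [h1, h2, integral_withDensity_eq_integral_smul hmeas]
  have hpdf_le : ∀ x : ℝ, gaussianPDFReal 0 1 x ≤ (Real.sqrt (2 * Real.pi))⁻¹ := by
    intro x
    rw [gaussianPDFReal]
    have : Real.exp (-(x - 0)^2 / (2 * (1:ℝ≥0))) ≤ 1 := by
      rw [Real.exp_le_one_iff]
      have : (0:ℝ) ≤ (x - 0)^2 := sq_nonneg _
      push_cast
      nlinarith
    calc (Real.sqrt (2 * Real.pi * (1:ℝ≥0)))⁻¹ * Real.exp (-(x - 0)^2 / (2 * (1:ℝ≥0)))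
        ≤ (Real.sqrt (2 * Real.pi * (1:ℝ≥0)))⁻¹ * 1 := by
          apply mul_le_mul_of_nonneg_left this (by positivity)
      _ = (Real.sqrt (2 * Real.pi))⁻¹ := by push_cast; rw [mul_one, mul_one]
  have hbound : Integrable (fun x : ℝ => (Real.sqrt (2 * Real.pi))⁻¹ * Real.exp (-t * |x|)) :=
    (aux_integrable ht).const_mul _
  have hle : ∫ x : ℝ, (gaussianPDFReal 0 1 x).toNNReal • Real.exp (-t * |x|)
      ≤ ∫ x : ℝ, (Real.sqrt (2 * Real.pi))⁻¹ * Real.exp (-t * |x|) := by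
    refine integral_mono_of_nonneg (ae_of_all _ fun x => ?_) hbound (ae_of_all _ fun x => ?_)
    · have : (0:ℝ) ≤ ((gaussianPDFReal 0 1 x).toNNReal : ℝ) := NNReal.coe_nonneg _
      positivity
    · simp only [NNReal.smul_def, smul_eq_mul]
      apply mul_le_mul_of_nonneg_right _ (Real.exp_nonneg _)
      rw [Real.coe_toNNReal _ (gaussianPDFReal_nonneg 0 1 x)]
      exact hpdf_le x
  refine hle.trans ?_
  rw [integral_const_mul, aux_integral ht, aux_sqrt]
  rw [div_div]
  refine le_of_eq ?_
  field_simp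

theorem stmt_11 {Ω : Type*} [MeasureSpace Ω] (μ : Measure Ω) [IsProbabilityMeasure μ]
    (S : ℕ) (hS : 1 ≤ S) (h : Fin S → Ω → ℝ) (hmeas : ∀ i, Measurable (h i))
    (hgauss : ∀ i, μ.map (h i) = gaussianReal 0 1)
    (hindep : iIndepFun h μ)
    (k : ℝ) (hk : 0 < k) :
    μ {ω | ∑ i, |h i ω| < k} ≤
      ENNReal.ofReal ((Real.exp 1 * k / S * Real.sqrt (2 / Real.pi)) ^ S) := by
  have hSpos : (0:ℝ) < S := by exact_mod_cast hS
  set t : ℝ := S / k with ht_def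
  have ht : 0 < t := div_pos hSpos hk
  set X : Fin S → Ω → ℝ := fun i ω => |h i ω| with hX_def
  have hXmeas : ∀ i, Measurable (X i) := fun i => (hmeas i).abs
  have hXindep : iIndepFun X μ :=
    hindep.comp (fun _ x => |x|) (fun _ => measurable_abs)
  have hsum_apply : ∀ ω, (∑ i, X i) ω = ∑ i, |h i ω| := by
    intro ω; rw [Finset.sum_apply]
  -- integrability of the exponential
  have hexp_meas : Measurable (fun ω => Real.exp (-t * (∑ i, X i) ω)) := by
    have hm : Measurable (fun ω => ∑ i, |h i ω|) :=
      Finset.measurable_sum _ (fun i _ => (hmeas i).abs)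
    have heq : (fun ω => Real.exp (-t * (∑ i, X i) ω))
        = fun ω => Real.exp (-t * ∑ i, |h i ω|) := by
      funext ω; rw [hsum_apply]
    rw [heq]
    exact (hm.const_mul (-t)).exp
  have hint : Integrable (fun ω => Real.exp (-t * (∑ i, X i) ω)) μ := by
    refine Integrable.mono' (integrable_const 1) hexp_meas.aestronglyMeasurable
      (ae_of_all _ fun ω => ?_)
    rw [Real.norm_eq_abs, abs_of_nonneg (Real.exp_nonneg _), Real.exp_le_one_iff]
    have h0 : 0 ≤ (∑ i, X i) ω := by
      rw [hsum_apply]; exact Finset.sum_nonneg fun i _ => abs_nonneg _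
    nlinarith
  -- Chernoff bound
  have key := measure_le_le_exp_mul_mgf (μ := μ) (X := ∑ i, X i) (t := -t) k
    (neg_nonpos.mpr ht.le) hint
  -- mgf of sum = product of mgfs
  rw [show (∑ i, X i) = ∑ i ∈ Finset.univ, X i from rfl,
    hXindep.mgf_sum hXmeas Finset.univ] at key
  -- bound each mgf
  have hmgf_le : ∀ i, mgf (X i) μ (-t) ≤ Real.sqrt (2 / Real.pi) / t := by
    intro i
    have hcont : Continuous fun x : ℝ => Real.exp (-t * |x|) :=
      Real.continuous_exp.comp (continuous_const.mul continuous_abs)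
    have : mgf (X i) μ (-t) = ∫ x, Real.exp (-t * |x|) ∂(μ.map (h i)) := by
      rw [mgf, integral_map (hmeas i).aemeasurable hcont.aestronglyMeasurable]
    rw [this, hgauss i]
    exact aux_gauss_mgf ht
  have hprod_le : ∏ i, mgf (X i) μ (-t) ≤ (Real.sqrt (2 / Real.pi) / t) ^ S := by
    calc ∏ i, mgf (X i) μ (-t) ≤ ∏ _i : Fin S, (Real.sqrt (2 / Real.pi) / t) :=
          Finset.prod_le_prod (fun i _ => mgf_nonneg) (fun i _ => hmgf_le i)
      _ = (Real.sqrt (2 / Real.pi) / t) ^ S := by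
          rw [Finset.prod_const, Finset.card_univ, Fintype.card_fin]
  have hB_nonneg : (0:ℝ) ≤ Real.sqrt (2 / Real.pi) / t := by positivity
  have hfinal : (μ {ω | (∑ i, X i) ω ≤ k}).toReal
      ≤ (Real.exp 1 * k / S * Real.sqrt (2 / Real.pi)) ^ S := by
    refine key.trans ?_
    have h1 : Real.exp (-(-t) * k) = Real.exp 1 ^ S := by
      rw [neg_neg, ht_def, div_mul_cancel₀ _ hk.ne',
        show ((S:ℝ)) = (S:ℝ) * 1 by ring, Real.exp_nat_mul]
    calc Real.exp (-(-t) * k) * ∏ i, mgf (X i) μ (-t)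
        ≤ Real.exp (-(-t) * k) * (Real.sqrt (2 / Real.pi) / t) ^ S := by
          apply mul_le_mul_of_nonneg_left hprod_le (Real.exp_nonneg _)
      _ = (Real.exp 1 * (Real.sqrt (2 / Real.pi) / t)) ^ S := by
          rw [h1, mul_pow]
      _ = (Real.exp 1 * k / S * Real.sqrt (2 / Real.pi)) ^ S := by
          congr 1
          rw [ht_def]
          field_simp
  -- convert to ENNReal
  have hsubset : {ω | ∑ i, |h i ω| < k} ⊆ {ω | (∑ i, X i) ω ≤ k} := by
    intro ω hω
    rw [Set.mem_setOf_eq, hsum_apply]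
    exact le_of_lt hω
  calc μ {ω | ∑ i, |h i ω| < k} ≤ μ {ω | (∑ i, X i) ω ≤ k} := measure_mono hsubset
    _ = ENNReal.ofReal ((μ {ω | (∑ i, X i) ω ≤ k}).toReal) :=
        (ENNReal.ofReal_toReal (measure_ne_top μ _)).symm
    _ ≤ ENNReal.ofReal ((Real.exp 1 * k / S * Real.sqrt (2 / Real.pi)) ^ S) :=
        ENNReal.ofReal_le_ofReal hfinal
end
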